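/- If X is continuously distributed with law L_X, Y ~ Uniform{1,…,K} independent of X, and C is any procedure that produces a (1-α)-probability upper confidence bound for ETV(X,Y) valid simultaneously over all joint laws of (X,Y) with these given marginals, then P(C(X₁:ₙ, Y₁:ₙ) ≥ 1) ≥ 1 - α when the data are drawn i.i.d. from L_X × Uniform{1,…,K}. -/

import Mathlib

open MeasureTheory ProbabilityTheory

open Filter
open scoped ENNReal

set_option maxHeartbeats 1000000


lemma cdf_leftLim_eq (μ : Measure ℝ) [IsProbabilityMeasure μ] (hμ : ∀ x : ℝ, μ {x} = 0)
    (x : ℝ) : Function.leftLim (cdf μ) x = cdf μ x := by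
  have hm := monotone_cdf μ
  have h0 : (cdf μ).measure {x} = 0 := by rw [measure_cdf]; exact hμ x
  rw [StieltjesFunction.measure_singleton] at h0
  have h1 := hm.leftLim_le (le_refl x)
  have h2 : cdf μ x - Function.leftLim (cdf μ) x ≤ 0 := by
    by_contra h
    push_neg at h
    simp [ENNReal.ofReal_eq_zero] at h0
    linarith
  linarith

lemma measure_cdf_le (μ : Measure ℝ) [IsProbabilityMeasure μ] (hμ : ∀ x : ℝ, μ {x} = 0)
    {t : ℝ} (ht0 : 0 ≤ t) (ht1 : t < 1) :
    μ {x | cdf μ x ≤ t} = ENNReal.ofReal t := by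
  set F := cdf μ with hF
  have hm := monotone_cdf μ
  set S := {x | F x ≤ t} with hS
  rcases Set.eq_empty_or_nonempty S with h | h
  · rw [h]
    -- S empty : need t = 0? show t ≤ 0 so ofReal t = 0
    have : ∀ x, t < F x := by
      intro x
      by_contra hx
      push_neg at hx
      rw [Set.eq_empty_iff_forall_notMem] at h
      exact h x hx
    -- F → 0 at -∞, so t ≤ 0, hence t = 0
    have ht : t ≤ 0 := by
      by_contra hc
      push_neg at hc
      obtain ⟨x, hx⟩ : ∃ x, F x < t := by
        have := tendsto_cdf_atBot μ
        have := this.eventually (eventually_lt_nhds hc)  -- eventually F x < t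
        exact this.exists
      exact absurd hx (not_lt.2 (this x).le)
    simp [le_antisymm ht ht0]
  · -- S nonempty
    have hbdd : BddAbove S := by
      obtain ⟨x₀, hx₀⟩ : ∃ x₀, t < F x₀ := by
        have := (tendsto_cdf_atTop μ).eventually (eventually_gt_nhds ht1)
        exact this.exists
      refine ⟨x₀, fun x hx => ?_⟩
      by_contra hc
      push_neg at hc
      exact absurd (hm hc.le) (not_le.2 (lt_of_le_of_lt hx hx₀))
    set q := sSup S with hq
    have hIio : Set.Iio q ⊆ S := by
      intro y hy
      obtain ⟨x, hxS, hyx⟩ := exists_lt_of_lt_csSup h hy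
      exact le_trans (hm hyx.le) hxS
    have hSIic : S ⊆ Set.Iic q := fun x hx => le_csSup hbdd hx
    -- F q = t
    have hFq_le : F q ≤ t := by
      rw [← cdf_leftLim_eq μ hμ q]
      have : Tendsto F (nhdsWithin q (Set.Iio q)) (nhds (Function.leftLim F q)) :=
        hm.tendsto_leftLim q
      refine le_of_tendsto this ?_
      filter_upwards [self_mem_nhdsWithin] with y hy
      exact hIio hy
    have hFq_ge : t ≤ F q := by
      have hrc := ((cdf μ).right_continuous q).tendsto.mono_left
        (nhdsWithin_mono q (Set.Ioi_subset_Ici le_rfl))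
      refine ge_of_tendsto hrc ?_
      filter_upwards [self_mem_nhdsWithin] with y hy
      have : y ∉ S := fun hyS => absurd (hSIic hyS) (show ¬ y ≤ q from not_le.2 hy)
      exact (not_le.1 this).le
    have hFq : F q = t := le_antisymm hFq_le hFq_ge
    -- μ S = μ (Iic q)
    have h1 : μ S ≤ μ (Set.Iic q) := measure_mono hSIic
    have h2 : μ (Set.Iio q) ≤ μ S := measure_mono hIio
    have h3 : μ (Set.Iic q) ≤ μ {q} + μ (Set.Iio q) := by
      rw [← Set.Iio_insert, Set.insert_eq]; exact measure_union_le _ _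
    rw [hμ q, zero_add] at h3
    have h4 : μ S = μ (Set.Iic q) := le_antisymm h1 (le_trans h3 h2)
    rw [h4, ← ofReal_cdf μ q, hFq]

lemma measure_cdf_lt (μ : Measure ℝ) [IsProbabilityMeasure μ] (hμ : ∀ x : ℝ, μ {x} = 0)
    {t : ℝ} (ht0 : 0 ≤ t) (ht1 : t ≤ 1) :
    μ {x | cdf μ x < t} = ENNReal.ofReal t := by
  rcases eq_or_lt_of_le ht0 with h0 | h0
  · have : {x | cdf μ x < t} = ∅ := by
      ext x; simp only [Set.mem_setOf_eq, Set.mem_empty_iff_false, iff_false, not_lt, ← h0]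
      exact cdf_nonneg μ x
    rw [this, measure_empty, ← h0, ENNReal.ofReal_zero]
  · refine le_antisymm ?_ ?_
    · rcases eq_or_lt_of_le ht1 with h1 | h1
      · rw [h1]; simpa using prob_le_one
      · calc μ {x | cdf μ x < t} ≤ μ {x | cdf μ x ≤ t} :=
              measure_mono (Set.setOf_subset_setOf.mpr (fun x hx => le_of_lt hx))
          _ = ENNReal.ofReal t := measure_cdf_le μ hμ ht0 h1
    · have htend : Filter.Tendsto (fun n : ℕ => ENNReal.ofReal (t - 1/(n+1)))
          Filter.atTop (nhds (ENNReal.ofReal t)) := by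
        refine ENNReal.continuous_ofReal.continuousAt.tendsto.comp ?_
        have := tendsto_one_div_add_atTop_nhds_zero_nat (𝕜 := ℝ)
        have h2 := Filter.Tendsto.const_sub t this
        simpa using h2
      refine le_of_tendsto htend ?_
      have hev : ∀ᶠ n : ℕ in Filter.atTop, 0 ≤ t - 1/(n+1) := by
        have : Filter.Tendsto (fun n : ℕ => t - 1/(n+1)) Filter.atTop (nhds t) := by
          have := tendsto_one_div_add_atTop_nhds_zero_nat (𝕜 := ℝ)
          simpa using Filter.Tendsto.const_sub t this
        exact this.eventually (eventually_ge_nhds h0)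
      filter_upwards [hev] with n hn
      have hsub : t - 1/(n+1) < 1 := by
        have : (0:ℝ) < 1/(n+1) := by positivity
        linarith
      rw [← measure_cdf_le μ hμ hn hsub]
      refine measure_mono (fun x hx => ?_)
      simp only [Set.mem_setOf_eq] at hx ⊢
      have : (0:ℝ) < 1/(n+1) := by positivity
      linarith

lemma measure_cdf_Ico (μ : Measure ℝ) [IsProbabilityMeasure μ] (hμ : ∀ x : ℝ, μ {x} = 0)
    {a b : ℝ} (h0 : 0 ≤ a) (hab : a ≤ b) (h1 : b ≤ 1) :
    μ {x | a ≤ cdf μ x ∧ cdf μ x < b} = ENNReal.ofReal (b - a) := by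
  have hset : {x | a ≤ cdf μ x ∧ cdf μ x < b} = {x | cdf μ x < b} \ {x | cdf μ x < a} := by
    ext x; simp only [Set.mem_setOf_eq, Set.mem_diff, not_lt]; tauto
  have hmeas : MeasurableSet {x | cdf μ x < a} :=
    measurableSet_lt ((monotone_cdf μ).measurable) measurable_const
  rw [hset, measure_diff (Set.setOf_subset_setOf.mpr (fun x hx => lt_of_lt_of_le hx hab))
      hmeas.nullMeasurableSet (measure_ne_top μ _),
    measure_cdf_lt μ hμ h0 (le_trans hab h1), measure_cdf_lt μ hμ (le_trans h0 hab) h1,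
    ENNReal.ofReal_sub _ h0]

lemma measure_cdf_ge (μ : Measure ℝ) [IsProbabilityMeasure μ] (hμ : ∀ x : ℝ, μ {x} = 0)
    {a : ℝ} (h0 : 0 ≤ a) (h1 : a ≤ 1) :
    μ {x | a ≤ cdf μ x} = ENNReal.ofReal (1 - a) := by
  have hset : {x | a ≤ cdf μ x} = Set.univ \ {x | cdf μ x < a} := by
    ext x; simp [not_lt]
  have hmeas : MeasurableSet {x | cdf μ x < a} :=
    measurableSet_lt ((monotone_cdf μ).measurable) measurable_const
  rw [hset, measure_diff (Set.subset_univ _) hmeas.nullMeasurableSet (measure_ne_top μ _),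
    measure_univ, measure_cdf_lt μ hμ h0 h1]
  rw [← ENNReal.ofReal_one, ← ENNReal.ofReal_sub _ h0]

noncomputable def Nf (μ : Measure ℝ) (M : ℕ) [NeZero M] (x : ℝ) : Fin M :=
  ⟨min ⌊(M : ℝ) * cdf μ x⌋₊ (M - 1), by
    have : 0 < M := Nat.pos_of_ne_zero (NeZero.ne M); omega⟩

lemma Nf_preim_lt (μ : Measure ℝ) [IsProbabilityMeasure μ] (M : ℕ) [NeZero M]
    {t : Fin M} (ht : (t : ℕ) < M - 1) :
    Nf μ M ⁻¹' {t} = {x | ((t:ℕ):ℝ)/M ≤ cdf μ x ∧ cdf μ x < (((t:ℕ):ℝ)+1)/M} := by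
  have hM : 0 < M := Nat.pos_of_ne_zero (NeZero.ne M)
  have hMR : (0:ℝ) < M := by exact_mod_cast hM
  ext x
  have h0 : (0:ℝ) ≤ (M : ℝ) * cdf μ x := mul_nonneg (by positivity) (cdf_nonneg μ x)
  simp only [Set.mem_preimage, Set.mem_singleton_iff, Nf, Fin.ext_iff, Set.mem_setOf_eq]
  constructor
  · intro h
    have ha : ⌊(M : ℝ) * cdf μ x⌋₊ = (t:ℕ) := by
      rcases min_eq_iff.mp h with ⟨h1, _⟩ | ⟨h1, _⟩
      · exact h1.symm ▸ rfl
      · omega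
    have := (Nat.floor_eq_iff h0).mp ha
    constructor
    · rw [div_le_iff₀ hMR]; linarith [this.1]
    · rw [lt_div_iff₀ hMR]; push_cast; push_cast at this; linarith [this.2]
  · intro ⟨h1, h2⟩
    have ha : ⌊(M : ℝ) * cdf μ x⌋₊ = (t:ℕ) := by
      rw [Nat.floor_eq_iff h0]
      rw [div_le_iff₀ hMR] at h1
      rw [lt_div_iff₀ hMR] at h2
      constructor
      · linarith
      · push_cast; push_cast at h2; linarith
    rw [ha]; omega
lemma Nf_preim_top (μ : Measure ℝ) [IsProbabilityMeasure μ] (M : ℕ) [NeZero M]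
    {t : Fin M} (ht : (t : ℕ) = M - 1) :
    Nf μ M ⁻¹' {t} = {x | ((M:ℝ)-1)/M ≤ cdf μ x} := by
  have hM : 0 < M := Nat.pos_of_ne_zero (NeZero.ne M)
  have hMR : (0:ℝ) < M := by exact_mod_cast hM
  have hcast : ((M - 1 : ℕ) : ℝ) = (M:ℝ) - 1 := by
    rw [Nat.cast_sub hM]; norm_num
  ext x
  have h0 : (0:ℝ) ≤ (M : ℝ) * cdf μ x := mul_nonneg (by positivity) (cdf_nonneg μ x)
  simp only [Set.mem_preimage, Set.mem_singleton_iff, Nf, Fin.ext_iff, Set.mem_setOf_eq, ht]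
  constructor
  · intro h
    have h2 : M - 1 ≤ ⌊(M : ℝ) * cdf μ x⌋₊ := by omega
    have := (Nat.le_floor_iff h0).mp h2
    rw [hcast] at this
    rw [div_le_iff₀ hMR]; linarith
  · intro h
    have h2 : ((M - 1 : ℕ) : ℝ) ≤ (M : ℝ) * cdf μ x := by
      rw [hcast]; rw [div_le_iff₀ hMR] at h; linarith
    have := Nat.le_floor h2
    omega

lemma Nf_measurable (μ : Measure ℝ) [IsProbabilityMeasure μ] (M : ℕ) [NeZero M] :
    Measurable (Nf μ M) := by
  have hF : Measurable (cdf μ) := (monotone_cdf μ).measurable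
  refine measurable_to_countable' (fun t => ?_)
  by_cases ht : (t : ℕ) = M - 1
  · rw [Nf_preim_top μ M ht]
    exact measurableSet_le measurable_const hF
  · have ht' : (t : ℕ) < M - 1 := by
      have := t.isLt; omega
    rw [Nf_preim_lt μ M ht']
    exact (measurableSet_le measurable_const hF).inter (measurableSet_lt hF measurable_const)

lemma map_Nf_eq (μ : Measure ℝ) [IsProbabilityMeasure μ] (hμ : ∀ x : ℝ, μ {x} = 0)
    (M : ℕ) [NeZero M] :
    μ.map (Nf μ M) = (PMF.uniformOfFintype (Fin M)).toMeasure := by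
  have hM : 0 < M := Nat.pos_of_ne_zero (NeZero.ne M)
  have hMR : (0:ℝ) < M := by exact_mod_cast hM
  refine Measure.ext_of_singleton (fun t => ?_)
  rw [Measure.map_apply (Nf_measurable μ M) (measurableSet_singleton t),
    PMF.toMeasure_apply_singleton _ _ (measurableSet_singleton t), PMF.uniformOfFintype_apply]
  have htarget : ((Fintype.card (Fin M) : ℝ≥0∞))⁻¹ = ENNReal.ofReal (1 / M) := by
    rw [Fintype.card_fin, ENNReal.ofReal_div_of_pos hMR, ENNReal.ofReal_one,
      ENNReal.ofReal_natCast, one_div]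
  rw [htarget]
  by_cases ht : (t : ℕ) = M - 1
  · have hM1 : (1:ℝ) ≤ M := by exact_mod_cast hM
    rw [Nf_preim_top μ M ht, measure_cdf_ge μ hμ (div_nonneg (by linarith) hMR.le)
      (by rw [div_le_one hMR]; linarith)]
    congr 1
    field_simp
    ring
  · have ht' : (t : ℕ) < M - 1 := by have := t.isLt; omega
    rw [Nf_preim_lt μ M ht', measure_cdf_Ico μ hμ (by positivity)
      (by gcongr; linarith)
      (by rw [div_le_one hMR]; have := t.isLt; exact_mod_cast this)]
    congr 1
    field_simp
    ring

noncomputable def unifM (X : Type*) [Fintype X] [Nonempty X] [MeasurableSpace X] : Measure X :=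
  (PMF.uniformOfFintype X).toMeasure

lemma unifM_singleton (X : Type*) [Fintype X] [Nonempty X] [MeasurableSpace X]
    [MeasurableSingletonClass X] (x : X) :
    unifM X {x} = (Fintype.card X : ℝ≥0∞)⁻¹ := by
  rw [unifM, PMF.toMeasure_apply_singleton _ _ (measurableSet_singleton x),
    PMF.uniformOfFintype_apply]

instance unifM_prob (X : Type*) [Fintype X] [Nonempty X] [MeasurableSpace X] :
    IsProbabilityMeasure (unifM X) := by
  rw [unifM]; infer_instance

-- reindexing lemma
lemma pi_map_reindex {K J n : ℕ} [NeZero K] {e : Fin n → Fin J} (he : Function.Injective e) :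
    (Measure.pi fun _ : Fin J => unifM (Fin K)).map (fun θ i => θ (e i))
      = Measure.pi (fun _ : Fin n => unifM (Fin K)) := by
  refine Measure.ext_of_singleton (fun w => ?_)
  have hmeas : Measurable (fun (θ : Fin J → Fin K) i => θ (e i)) :=
    measurable_pi_lambda _ (fun i => measurable_pi_apply (e i))
  rw [Measure.map_apply hmeas (measurableSet_singleton w)]
  have hset : (fun (θ : Fin J → Fin K) i => θ (e i)) ⁻¹' {w}
      = Set.univ.pi (fun c => {v | ∀ i, e i = c → v = w i}) := by
    ext θ
    simp only [Set.mem_preimage, Set.mem_singleton_iff, funext_iff, Set.mem_pi, Set.mem_univ,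
      Set.mem_setOf_eq, forall_true_left]
    constructor
    · intro h c i hic; rw [← hic]; exact h i
    · intro h i; exact h (e i) i rfl
  rw [hset, Measure.pi_pi]
  have hsing : {w} = Set.univ.pi (fun i => {w i}) := by
    ext θ; simp [funext_iff]
  rw [hsing, Measure.pi_pi]
  rw [← Finset.prod_subset (Finset.subset_univ (Finset.image e Finset.univ))
    (fun c _ hc => ?_), Finset.prod_image (fun i _ j _ h => he h)]
  · refine Finset.prod_congr rfl (fun i _ => ?_)
    congr 1
    ext v
    simp only [Set.mem_setOf_eq, Set.mem_singleton_iff]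
    constructor
    · intro h; exact h i rfl
    · intro h i' hi'; rw [h]; exact congrArg w (he hi'.symm) ▸ rfl
  · have hc' : ∀ i, e i ≠ c := by
      simp only [Finset.mem_image, Finset.mem_univ, true_and, not_exists] at hc
      exact hc
    have : {v | ∀ i, e i = c → v = w i} = Set.univ := by
      ext v
      simp only [Set.mem_setOf_eq, Set.mem_univ, iff_true]
      intro i hi
      exact absurd hi (hc' i)
    rw [this, measure_univ]

-- translation lemma
lemma unifM_map_add {K : ℕ} [NeZero K] (b : Fin K) :
    (unifM (Fin K)).map (fun w => b + w) = unifM (Fin K) := by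
  refine Measure.ext_of_singleton (fun y => ?_)
  rw [Measure.map_apply (measurable_of_countable _) (measurableSet_singleton y)]
  have : (fun w : Fin K => b + w) ⁻¹' {y} = {y - b} := by
    ext w
    simp only [Set.mem_preimage, Set.mem_singleton_iff]
    constructor
    · intro h; exact eq_sub_of_add_eq' h
    · intro h; rw [h]; exact add_sub_cancel b y
  rw [this, unifM_singleton, unifM_singleton]

-- two-coordinate product
lemma pi_two_coord {n : ℕ} (LX : Measure ℝ) [IsProbabilityMeasure LX] {i j : Fin n}
    (hij : i ≠ j) {B : Set ℝ} (hB : MeasurableSet B) :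
    (Measure.pi fun _ : Fin n => LX) {xs | xs i ∈ B ∧ xs j ∈ B} = LX B * LX B := by
  classical
  have hset : {xs : Fin n → ℝ | xs i ∈ B ∧ xs j ∈ B}
      = Set.univ.pi (fun t => if t = i ∨ t = j then B else Set.univ) := by
    ext xs
    simp only [Set.mem_setOf_eq, Set.mem_pi, Set.mem_univ, forall_true_left]
    constructor
    · intro ⟨h1, h2⟩ t
      by_cases ht : t = i ∨ t = j
      · rcases ht with rfl | rfl <;> simp [h1, h2]
      · simp [ht]
    · intro h
      constructor
      · have := h i; simpa using this
      · have := h j; simpa using this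
  rw [hset, Measure.pi_pi]
  have hout : ∀ t ∈ Finset.univ, t ∉ ({i, j} : Finset (Fin n)) →
      LX (if t = i ∨ t = j then B else Set.univ) = 1 := by
    intro t _ ht
    have ht' : ¬(t = i ∨ t = j) := by simpa [Finset.mem_insert] using ht
    simp [ht']
  rw [← Finset.prod_subset (Finset.subset_univ ({i, j} : Finset (Fin n))) hout,
    Finset.prod_pair hij]
  simp

lemma meas_all {X : Type*} [MeasurableSpace X] [Countable X] [MeasurableSingletonClass X]
    (s : Set X) : MeasurableSet s := s.to_countable.measurableSet

-- compProd with deterministic kernel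
lemma compProd_det {α β : Type*} [MeasurableSpace α] [MeasurableSpace β]
    (μ : Measure α) [SFinite μ] {f : α → β} (hf : Measurable f) :
    μ ⊗ₘ Kernel.deterministic f hf = μ.map (fun x => (x, f x)) := by
  ext s hs
  rw [Measure.compProd_apply hs, Measure.map_apply (measurable_id'.prodMk hf) hs]
  have : ∀ a, (Kernel.deterministic f hf) a (Prod.mk a ⁻¹' s)
      = ((fun x => (x, f x)) ⁻¹' s).indicator 1 a := by
    intro a
    rw [Kernel.deterministic_apply, Measure.dirac_apply' _ (measurable_prodMk_left hs)]
    rfl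
  simp_rw [this]
  rw [lintegral_indicator_one ((measurable_id'.prodMk hf) hs)]

section rho
variable (LX : Measure ℝ) [IsProbabilityMeasure LX] {K : ℕ} [NeZero K]

variable {Km : ℕ} [NeZero Km] (g : ℝ → Fin K) (hg : Measurable g)

noncomputable def rho : Measure (ℝ × Fin K) := LX.map (fun x => (x, g x))

theorem rho_prob (hg : Measurable g) : IsProbabilityMeasure (rho LX g) := by
  rw [rho]; exact Measure.isProbabilityMeasure_map (measurable_id.prodMk hg).aemeasurable

lemma rho_fst (hg : Measurable g) : (rho LX g).map Prod.fst = LX := by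
  have h := Measure.fst_map_prodMk (μ := LX) (X := id) hg
  rw [Measure.fst] at h
  rw [rho]
  simpa [Measure.map_id] using h

lemma rho_condKernel (hg : Measurable g) [IsFiniteMeasure (rho LX g)] : ∀ᵐ x ∂LX, (rho LX g).condKernel x = Measure.dirac (g x) := by
  have hcp : rho LX g = (rho LX g).fst ⊗ₘ Kernel.deterministic g hg := by
    rw [Measure.fst, rho_fst LX g hg, compProd_det LX hg, rho]
  have h := eq_condKernel_of_measure_eq_compProd (ρ := rho LX g)
      (Kernel.deterministic g hg) hcp
  rw [Measure.fst, rho_fst LX g hg] at h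
  filter_upwards [h] with x hx
  rw [← hx, Kernel.deterministic_apply]

lemma rho_etv (hg : Measurable g) [IsFiniteMeasure (rho LX g)] (hK : 2 ≤ K) (hsnd : (rho LX g).map Prod.snd = unifM (Fin K)) :
    (1 - 1/(K:ℝ))⁻¹ * ∫ x, (1/2) * ∑ y : Fin K,
        |((rho LX g).condKernel x {y}).toReal - (((rho LX g).map Prod.snd) {y}).toReal|
      ∂((rho LX g).map Prod.fst) = 1 := by
  have hKR : (2:ℝ) ≤ K := by exact_mod_cast hK
  have hKpos : (0:ℝ) < K := by linarith
  have hsnd' : ∀ y : Fin K, (((rho LX g).map Prod.snd) {y}).toReal = 1/K := by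
    intro y
    rw [hsnd, unifM_singleton, Fintype.card_fin, ENNReal.toReal_inv]
    simp
  have hae : ∀ᵐ x ∂LX, (1/2) * ∑ y : Fin K,
      |((rho LX g).condKernel x {y}).toReal - (((rho LX g).map Prod.snd) {y}).toReal|
      = 1 - 1/(K:ℝ) := by
    filter_upwards [rho_condKernel LX g hg] with x hx
    rw [hx]
    have hsum : ∑ y : Fin K,
        |(Measure.dirac (g x) {y}).toReal - (((rho LX g).map Prod.snd) {y}).toReal|
        = 2 - 2/(K:ℝ) := by
      have hterm : ∀ y : Fin K,
          |(Measure.dirac (g x) {y}).toReal - (((rho LX g).map Prod.snd) {y}).toReal|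
          = if y = g x then 1 - 1/(K:ℝ) else 1/K := by
        intro y
        rw [hsnd' y, Measure.dirac_apply]
        by_cases hy : y = g x
        · have : g x ∈ ({y} : Set (Fin K)) := by simp [hy]
          rw [if_pos hy]
          rw [Set.indicator_of_mem this]
          simp only [Pi.one_apply, ENNReal.toReal_one]
          rw [abs_of_nonneg]
          have : 1/(K:ℝ) ≤ 1/2 := by
            apply div_le_div_of_nonneg_left <;> linarith
          linarith
        · have : g x ∉ ({y} : Set (Fin K)) := by
            simp only [Set.mem_singleton_iff]; exact fun h => hy h.symm
          rw [if_neg hy, Set.indicator_of_notMem this]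
          simp only [ENNReal.toReal_zero, zero_sub, abs_neg]
          rw [abs_of_nonneg (by positivity)]
      simp_rw [hterm]
      have hsplit : ∀ y : Fin K, (if y = g x then 1 - 1/(K:ℝ) else 1/K)
          = 1/K + (if y = g x then 1 - 2/(K:ℝ) else 0) := by
        intro y; by_cases hy : y = g x <;> simp [hy] <;> ring
      simp_rw [hsplit]
      rw [Finset.sum_add_distrib, Finset.sum_const,
        Finset.sum_ite_eq' Finset.univ (g x) (fun _ => 1 - 2/(K:ℝ))]
      simp only [Finset.mem_univ, if_true, Finset.card_univ, Fintype.card_fin, nsmul_eq_mul]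
      rw [mul_one_div, div_self hKpos.ne']
      ring
    rw [hsum]; ring
  rw [rho_fst LX g hg, integral_congr_ae hae, integral_const, probReal_univ]
  simp only [ENNReal.toReal_one, one_smul]
  rw [inv_mul_cancel₀]
  have : 1/(K:ℝ) ≤ 1/2 := by
    apply div_le_div_of_nonneg_left <;> linarith
  intro h
  have : 1/(K:ℝ) = 1 := by linarith
  linarith
end rho

lemma key_bound {K : ℕ} [NeZero K] (LX : Measure ℝ) [IsProbabilityMeasure LX]
    (hLX : ∀ x : ℝ, LX {x} = 0) (hK : 2 ≤ K) (n : ℕ) {α : ℝ}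
    (C : (Fin n → ℝ × Fin K) → ℝ) (hC : Measurable C)
    (hvalid : ∀ (ρ : Measure (ℝ × Fin K)) [IsProbabilityMeasure ρ],
      ρ.map Prod.fst = LX →
      ρ.map Prod.snd = (PMF.uniformOfFintype (Fin K)).toMeasure →
      ENNReal.ofReal (1 - α) ≤
        (Measure.pi fun _ : Fin n => ρ)
          {d | (1 - 1/(K:ℝ))⁻¹ * ∫ x, (1/2) * ∑ y : Fin K,
              |(ρ.condKernel x {y}).toReal - (ρ.map Prod.snd {y}).toReal|
            ∂(ρ.map Prod.fst) ≤ C d})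
    (m : ℕ) :
    ENNReal.ofReal (1 - α) ≤
      (Measure.pi fun _ : Fin n => LX.prod (unifM (Fin K))) {d | 1 ≤ C d}
        + (n * n : ℝ≥0∞) * ((K^m : ℕ) : ℝ≥0∞)⁻¹ := by
  classical
  have hK0 : K ≠ 0 := NeZero.ne K
  haveI hKm0 : NeZero (K^m) := ⟨pow_ne_zero m hK0⟩
  haveI hM0 : NeZero (K^m * K) := ⟨mul_ne_zero (pow_ne_zero m hK0) hK0⟩
  set Km := K ^ m with hKmdef
  set M := K ^ m * K with hMdef
  set e : Fin Km × Fin K ≃ Fin M := finProdFinEquiv with hedef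
  set pairF : ℝ → Fin Km × Fin K := fun x => e.symm (Nf LX M x) with hpairdef
  have hpairF_meas : Measurable pairF := (measurable_of_countable _).comp (Nf_measurable LX M)
  have hpairLaw : LX.map pairF = (unifM (Fin Km)).prod (unifM (Fin K)) := by
    have h1 : LX.map pairF = (LX.map (Nf LX M)).map (⇑e.symm) :=
      (Measure.map_map (measurable_of_countable _) (Nf_measurable LX M)).symm
    rw [h1, map_Nf_eq LX hLX M]
    refine Measure.ext_of_singleton (fun p => ?_)
    rw [Measure.map_apply (measurable_of_countable _) (measurableSet_singleton p)]
    have hpre : (⇑e.symm) ⁻¹' {p} = {e p} := by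
      ext t; simp [Equiv.symm_apply_eq]
    rw [hpre]
    have hps : ({p} : Set (Fin Km × Fin K)) = {p.1} ×ˢ {p.2} := by
      ext q; simp [Prod.ext_iff]
    rw [hps, Measure.prod_prod,
      show (PMF.uniformOfFintype (Fin M)).toMeasure = unifM (Fin M) from rfl,
      unifM_singleton, unifM_singleton, unifM_singleton, Fintype.card_fin, Fintype.card_fin,
      Fintype.card_fin, hMdef, Nat.cast_mul,
      ENNReal.mul_inv (Or.inl (by exact_mod_cast pow_ne_zero m hK0))
        (Or.inl (ENNReal.natCast_ne_top _))]
  set cm : ℝ → Fin Km := fun x => (pairF x).1 with hcmdef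
  set vK : ℝ → Fin K := fun x => (pairF x).2 with hvKdef
  have hcm_meas : Measurable cm := measurable_fst.comp hpairF_meas
  set g : (Fin Km → Fin K) → ℝ → Fin K := fun θ x => vK x + θ (cm x) with hgdef
  have hg : ∀ θ, Measurable (g θ) := fun θ => (measurable_of_countable
    (fun p : Fin Km × Fin K => p.2 + θ p.1)).comp hpairF_meas
  have hsnd : ∀ θ, (rho LX (g θ)).map Prod.snd = unifM (Fin K) := by
    intro θ
    have h2 : (rho LX (g θ)).map Prod.snd = LX.map (g θ) := by
      have h3 := Measure.snd_map_prodMk (μ := LX) (X := id) (Y := g θ) measurable_id'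
      rw [Measure.snd] at h3
      exact h3
    rw [h2]
    have hcomp : g θ = (fun p : Fin Km × Fin K => p.2 + θ p.1) ∘ pairF := rfl
    rw [hcomp, ← Measure.map_map (measurable_of_countable _) hpairF_meas, hpairLaw]
    refine Measure.ext_of_singleton (fun y => ?_)
    rw [Measure.map_apply (measurable_of_countable _) (measurableSet_singleton y),
      Measure.prod_apply (meas_all _)]
    have hslice : ∀ a : Fin Km,
        (Prod.mk a ⁻¹' ((fun p : Fin Km × Fin K => p.2 + θ p.1) ⁻¹' {y})) = {y - θ a} := by
      intro a
      ext b
      simp only [Set.mem_preimage, Set.mem_singleton_iff]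
      constructor
      · intro h; exact eq_sub_of_add_eq h
      · intro h; rw [h]; exact sub_add_cancel y (θ a)
    simp_rw [hslice, unifM_singleton]
    rw [lintegral_const, measure_univ, mul_one]
  -- step 1
  have hstep1 : ∀ θ : Fin Km → Fin K, ENNReal.ofReal (1-α) ≤
      (Measure.pi fun _ : Fin n => rho LX (g θ)) {d | (1:ℝ) ≤ C d} := by
    intro θ
    haveI := rho_prob LX (g θ) (hg θ)
    have h := hvalid (rho LX (g θ)) (rho_fst LX (g θ) (hg θ)) (hsnd θ)
    rw [rho_etv LX (g θ) (hg θ) hK (hsnd θ)] at h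
    exact h
  set piT := Measure.pi (fun _ : Fin Km => unifM (Fin K)) with hpiTdef
  set LXn := Measure.pi (fun _ : Fin n => LX) with hLXndef
  set UKn := Measure.pi (fun _ : Fin n => unifM (Fin K)) with hUKndef
  set A : Set (Fin n → ℝ × Fin K) := {d | (1:ℝ) ≤ C d} with hAdef
  have hA : MeasurableSet A := measurableSet_le measurable_const hC
  set Phi : ((Fin Km → Fin K) × (Fin n → ℝ)) → (Fin n → ℝ × Fin K) :=
    fun p i => (p.2 i, g p.1 (p.2 i)) with hPhidef
  have hPhimeas : Measurable Phi := by
    refine measurable_pi_lambda _ (fun i =>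
      Measurable.prodMk ((measurable_pi_apply i).comp measurable_snd) ?_)
    refine measurable_to_countable' (fun y => ?_)
    have hset : ((fun p : (Fin Km → Fin K) × (Fin n → ℝ) => g p.1 (p.2 i)) ⁻¹' {y})
        = ⋃ a : Fin Km, ⋃ b : Fin K,
          ((fun p : (Fin Km → Fin K) × (Fin n → ℝ) => p.1 a) ⁻¹' {y - b}) ∩
          ((fun p : (Fin Km → Fin K) × (Fin n → ℝ) => p.2 i) ⁻¹' (pairF ⁻¹' {(a, b)})) := by
      ext p
      simp only [Set.mem_preimage, Set.mem_singleton_iff, Set.mem_iUnion, Set.mem_inter_iff]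
      constructor
      · intro h
        exact ⟨cm (p.2 i), vK (p.2 i), eq_sub_of_add_eq' h, rfl⟩
      · rintro ⟨a, b, h1, h2⟩
        have hcm' : cm (p.2 i) = a := by rw [hcmdef]; simp only [h2]
        have hvK' : vK (p.2 i) = b := by rw [hvKdef]; simp only [h2]
        show vK (p.2 i) + p.1 (cm (p.2 i)) = y
        rw [hcm', hvK', h1]
        exact add_sub_cancel b y
    rw [hset]
    refine MeasurableSet.iUnion (fun a => MeasurableSet.iUnion (fun b =>
      MeasurableSet.inter ?_ ?_))
    · exact ((measurable_pi_apply a).comp measurable_fst) (measurableSet_singleton _)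
    · exact ((measurable_pi_apply i).comp measurable_snd) (hpairF_meas (measurableSet_singleton _))
  set S := Phi ⁻¹' A with hSdef
  have hS : MeasurableSet S := hPhimeas hA
  have hPiT : ∀ θ, MeasurePreserving (fun (xs : Fin n → ℝ) i => (xs i, g θ (xs i)))
      LXn (Measure.pi fun _ : Fin n => rho LX (g θ)) :=
    fun θ => measurePreserving_pi _ _ (fun i => ⟨measurable_id'.prodMk (hg θ), rfl⟩)
  have hmix_ge : ENNReal.ofReal (1-α) ≤ (piT.prod LXn) S := by
    rw [Measure.prod_apply hS]
    have hpt : ∀ θ, ENNReal.ofReal (1-α) ≤ LXn (Prod.mk θ ⁻¹' S) := by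
      intro θ
      have h2 : (Measure.pi fun _ : Fin n => rho LX (g θ)) A = LXn (Prod.mk θ ⁻¹' S) := by
        rw [← (hPiT θ).map_eq, Measure.map_apply (hPiT θ).measurable hA]
        rfl
      rw [← h2]; exact hstep1 θ
    calc ENNReal.ofReal (1-α) = ∫⁻ _, ENNReal.ofReal (1-α) ∂piT := by
          rw [lintegral_const, measure_univ, mul_one]
      _ ≤ _ := lintegral_mono hpt
  set G : Set (Fin n → ℝ) := {xs | ∀ i j : Fin n, i ≠ j → cm (xs i) ≠ cm (xs j)} with hGdef
  have hGmeas : MeasurableSet G := by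
    have hGi : G = ⋂ i, ⋂ j, {xs : Fin n → ℝ | i ≠ j → cm (xs i) ≠ cm (xs j)} := by
      ext xs; simp only [hGdef, Set.mem_setOf_eq, Set.mem_iInter]
    rw [hGi]
    refine MeasurableSet.iInter (fun i => MeasurableSet.iInter (fun j => ?_))
    by_cases hij : i = j
    · have huniv : {xs : Fin n → ℝ | i ≠ j → cm (xs i) ≠ cm (xs j)} = Set.univ := by
        ext xs; simp [hij]
      rw [huniv]; exact MeasurableSet.univ
    · have hD : {xs : Fin n → ℝ | i ≠ j → cm (xs i) ≠ cm (xs j)}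
          = (fun xs : Fin n → ℝ => (cm (xs i), cm (xs j))) ⁻¹' {q | q.1 ≠ q.2} := by
        ext xs; simp [hij]
      rw [hD]
      exact ((hcm_meas.comp (measurable_pi_apply i)).prodMk
        (hcm_meas.comp (measurable_pi_apply j))) (meas_all _)
  have hGpt : ∀ xs ∈ G, piT ((fun θ => (θ, xs)) ⁻¹' S)
      = UKn ((fun ws : Fin n → Fin K => fun i => (xs i, ws i)) ⁻¹' A) := by
    intro xs hxs
    have he : Function.Injective (fun i => cm (xs i)) := by
      intro i j hij
      by_contra hne
      exact hxs i j hne hij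
    have hTset : ((fun θ => (θ, xs)) ⁻¹' S)
        = (fun θ : Fin Km → Fin K => fun i => vK (xs i) + θ (cm (xs i))) ⁻¹'
          ((fun ws : Fin n → Fin K => fun i => (xs i, ws i)) ⁻¹' A) := rfl
    rw [hTset]
    have hWmeas : MeasurableSet ((fun ws : Fin n → Fin K => fun i => (xs i, ws i)) ⁻¹' A) :=
      (measurable_pi_lambda _ (fun i => measurable_const.prodMk (measurable_pi_apply i))) hA
    have hmeas2 : Measurable (fun θ : Fin Km → Fin K => fun i => θ (cm (xs i))) :=
      measurable_pi_lambda _ (fun i => measurable_pi_apply (cm (xs i)))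
    have hmeas1 : Measurable (fun η : Fin n → Fin K => fun i => vK (xs i) + η i) :=
      measurable_pi_lambda _ (fun i =>
        (measurable_of_countable (fun w => vK (xs i) + w)).comp (measurable_pi_apply i))
    have hTmeas : Measurable (fun θ : Fin Km → Fin K => fun i => vK (xs i) + θ (cm (xs i))) :=
      measurable_pi_lambda _ (fun i =>
        (measurable_of_countable (fun w => vK (xs i) + w)).comp (measurable_pi_apply (cm (xs i))))
    rw [← Measure.map_apply hTmeas hWmeas]
    have hmapT : piT.map (fun θ : Fin Km → Fin K => fun i => vK (xs i) + θ (cm (xs i))) = UKn := by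
      have hcomp : (fun θ : Fin Km → Fin K => fun i => vK (xs i) + θ (cm (xs i)))
          = (fun η : Fin n → Fin K => fun i => vK (xs i) + η i)
            ∘ (fun θ : Fin Km → Fin K => fun i => θ (cm (xs i))) := rfl
      rw [hcomp, ← Measure.map_map hmeas1 hmeas2, hpiTdef, pi_map_reindex he]
      have hmp := measurePreserving_pi (fun _ : Fin n => unifM (Fin K))
        (fun _ : Fin n => unifM (Fin K)) (f := fun i => fun w => vK (xs i) + w)
        (fun i => ⟨measurable_of_countable _, unifM_map_add _⟩)
      exact hmp.map_eq
    rw [hmapT]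
  have hPn : (Measure.pi fun _ : Fin n => LX.prod (unifM (Fin K))) A
      = ∫⁻ xs, UKn ((fun ws : Fin n → Fin K => fun i => (xs i, ws i)) ⁻¹' A) ∂LXn := by
    have hmp0 := measurePreserving_arrowProdEquivProdArrow ℝ (Fin K) (Fin n)
      (fun _ => LX) (fun _ => unifM (Fin K))
    have hmp := hmp0.symm (MeasurableEquiv.arrowProdEquivProdArrow ℝ (Fin K) (Fin n))
    rw [← hmp.map_eq, Measure.map_apply hmp.measurable hA,
      Measure.prod_apply (hmp.measurable hA)]
    exact lintegral_congr (fun xs => rfl)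
  have hmix_le : (piT.prod LXn) S ≤
      (Measure.pi fun _ : Fin n => LX.prod (unifM (Fin K))) A + LXn Gᶜ := by
    rw [Measure.prod_apply_symm hS]
    rw [← lintegral_add_compl (fun xs => piT ((fun θ => (θ, xs)) ⁻¹' S)) hGmeas]
    refine add_le_add ?_ ?_
    · rw [hPn]
      have hind : ∀ xs, G.indicator (fun xs => piT ((fun θ => (θ, xs)) ⁻¹' S)) xs
          = G.indicator (fun xs =>
            UKn ((fun ws : Fin n → Fin K => fun i => (xs i, ws i)) ⁻¹' A)) xs := by
        intro xs
        by_cases hxs : xs ∈ G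
        · rw [Set.indicator_of_mem hxs, Set.indicator_of_mem hxs, hGpt xs hxs]
        · rw [Set.indicator_of_notMem hxs, Set.indicator_of_notMem hxs]
      calc ∫⁻ xs in G, piT ((fun θ => (θ, xs)) ⁻¹' S) ∂LXn
          = ∫⁻ xs in G,
              UKn ((fun ws : Fin n → Fin K => fun i => (xs i, ws i)) ⁻¹' A) ∂LXn := by
            rw [← lintegral_indicator hGmeas, ← lintegral_indicator hGmeas]
            exact lintegral_congr hind
        _ ≤ _ := setLIntegral_le_lintegral _ _
    · calc ∫⁻ xs in Gᶜ, piT ((fun θ => (θ, xs)) ⁻¹' S) ∂LXn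
          ≤ ∫⁻ _ in Gᶜ, 1 ∂LXn :=
            setLIntegral_mono' hGmeas.compl (fun xs _ => prob_le_one)
        _ = LXn Gᶜ := setLIntegral_one _
  have hbad : LXn Gᶜ ≤ (n * n : ℝ≥0∞) * ((K^m : ℕ) : ℝ≥0∞)⁻¹ := by
    have hpairb : ∀ i j : Fin n, i ≠ j →
        LXn {xs : Fin n → ℝ | cm (xs i) = cm (xs j)} ≤ ((K^m : ℕ) : ℝ≥0∞)⁻¹ := by
      intro i j hij
      have hcover : {xs : Fin n → ℝ | cm (xs i) = cm (xs j)}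
          ⊆ ⋃ a : Fin Km, {xs : Fin n → ℝ | xs i ∈ cm ⁻¹' {a} ∧ xs j ∈ cm ⁻¹' {a}} := by
        intro xs hxs
        exact Set.mem_iUnion.2 ⟨cm (xs j), hxs, rfl⟩
      have hBa : ∀ a : Fin Km, LX (cm ⁻¹' {a}) = ((Km : ℕ) : ℝ≥0∞)⁻¹ := by
        intro a
        have h5 : LX (cm ⁻¹' {a}) = (LX.map cm) {a} :=
          (Measure.map_apply hcm_meas (measurableSet_singleton a)).symm
        rw [h5]
        have hmapcm : LX.map cm = unifM (Fin Km) := by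
          have hcomp : cm = Prod.fst ∘ pairF := rfl
          rw [hcomp, ← Measure.map_map measurable_fst hpairF_meas, hpairLaw,
            Measure.map_fst_prod, measure_univ, one_smul]
        rw [hmapcm, unifM_singleton, Fintype.card_fin]
      have hKmne : ((Km : ℕ) : ℝ≥0∞) ≠ 0 := by
        exact_mod_cast (Nat.cast_ne_zero (R := ℝ≥0∞)).2 (NeZero.ne Km)
      calc LXn {xs : Fin n → ℝ | cm (xs i) = cm (xs j)}
          ≤ ∑ a : Fin Km, LXn {xs : Fin n → ℝ | xs i ∈ cm ⁻¹' {a} ∧ xs j ∈ cm ⁻¹' {a}} :=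
            (measure_mono hcover).trans (measure_iUnion_fintype_le _ _)
        _ = ∑ _a : Fin Km, ((Km : ℕ) : ℝ≥0∞)⁻¹ * ((Km : ℕ) : ℝ≥0∞)⁻¹ := by
            refine Finset.sum_congr rfl (fun a _ => ?_)
            rw [hLXndef, pi_two_coord LX hij (hcm_meas (measurableSet_singleton a)), hBa]
        _ = ((Km : ℕ) : ℝ≥0∞)⁻¹ := by
            rw [Finset.sum_const, Finset.card_univ, Fintype.card_fin, nsmul_eq_mul,
              ← mul_assoc, ENNReal.mul_inv_cancel hKmne (ENNReal.natCast_ne_top _), one_mul]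
    have hsub : Gᶜ ⊆ ⋃ i : Fin n, ⋃ j : Fin n,
        {xs : Fin n → ℝ | i ≠ j ∧ cm (xs i) = cm (xs j)} := by
      intro xs hxs
      simp only [hGdef, Set.mem_compl_iff, Set.mem_setOf_eq, not_forall] at hxs
      obtain ⟨i, j, hne, hcc⟩ := hxs
      exact Set.mem_iUnion.2 ⟨i, Set.mem_iUnion.2 ⟨j, hne, not_not.mp hcc⟩⟩
    calc LXn Gᶜ
        ≤ ∑ i : Fin n, LXn (⋃ j : Fin n,
            {xs : Fin n → ℝ | i ≠ j ∧ cm (xs i) = cm (xs j)}) :=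
          (measure_mono hsub).trans (measure_iUnion_fintype_le _ _)
      _ ≤ ∑ _i : Fin n, ∑ _j : Fin n, ((K^m : ℕ) : ℝ≥0∞)⁻¹ := by
          refine Finset.sum_le_sum (fun i _ => ?_)
          refine (measure_iUnion_fintype_le _ _).trans (Finset.sum_le_sum (fun j _ => ?_))
          by_cases hij : i = j
          · have : {xs : Fin n → ℝ | i ≠ j ∧ cm (xs i) = cm (xs j)} = ∅ := by
              ext xs; simp [hij]
            rw [this, measure_empty]; exact zero_le
          · refine (measure_mono ?_).trans (hpairb i j hij)
            intro xs hxs; exact hxs.2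
      _ = (n * n : ℝ≥0∞) * ((K^m : ℕ) : ℝ≥0∞)⁻¹ := by
          rw [Finset.sum_const, Finset.sum_const, Finset.card_univ, Fintype.card_fin,
            nsmul_eq_mul, nsmul_eq_mul, ← mul_assoc]
  calc ENNReal.ofReal (1-α) ≤ (piT.prod LXn) S := hmix_ge
    _ ≤ (Measure.pi fun _ : Fin n => LX.prod (unifM (Fin K))) A + LXn Gᶜ := hmix_le
    _ ≤ _ := add_le_add le_rfl hbad


/-- Impossibility of a nontrivial ETV upper confidence bound: if C is a
(1-α)-valid upper confidence bound for ETV(X,Y) over all joint laws ρ of (X,Y)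
with continuous X-marginal L_X and uniform Y-marginal on {1,…,K}, then under
independence (ρ = L_X × Unif) C must be ≥ 1 (the maximal ETV value) with
probability at least 1-α. -/
theorem stmt12 (LX : Measure ℝ) [IsProbabilityMeasure LX] (hLX : ∀ x : ℝ, LX {x} = 0)
    (K : ℕ) [NeZero K] (hK : 2 ≤ K) (n : ℕ) (hn : 0 < n)
    (α : ℝ) (hα : α ∈ Set.Ioo (0:ℝ) 1)
    (C : (Fin n → ℝ × Fin K) → ℝ) (hC : Measurable C)
    (hvalid : ∀ (ρ : Measure (ℝ × Fin K)) [IsProbabilityMeasure ρ],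
      ρ.map Prod.fst = LX →
      ρ.map Prod.snd = (PMF.uniformOfFintype (Fin K)).toMeasure →
      ENNReal.ofReal (1 - α) ≤
        (Measure.pi fun _ : Fin n => ρ)
          {d | (1 - 1/(K:ℝ))⁻¹ * ∫ x, (1/2) * ∑ y : Fin K,
              |(ρ.condKernel x {y}).toReal - (ρ.map Prod.snd {y}).toReal|
            ∂(ρ.map Prod.fst) ≤ C d}) :
    ENNReal.ofReal (1 - α) ≤
      (Measure.pi fun _ : Fin n => LX.prod (PMF.uniformOfFintype (Fin K)).toMeasure)
        {d | 1 ≤ C d} := by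
  have hkey : ∀ m : ℕ, ENNReal.ofReal (1 - α) ≤
      (Measure.pi fun _ : Fin n => LX.prod (PMF.uniformOfFintype (Fin K)).toMeasure)
        {d | 1 ≤ C d} + (n * n : ℝ≥0∞) * ((K^m : ℕ) : ℝ≥0∞)⁻¹ :=
    fun m => key_bound LX hLX hK n C hC hvalid m
  refine ENNReal.le_of_forall_pos_le_add (fun ε hε hlt => ?_)
  have hεne : (ε : ℝ≥0∞) ≠ 0 := by exact_mod_cast hε.ne'
  have hdivt : (n * n : ℝ≥0∞) / (ε : ℝ≥0∞) ≠ ∞ := by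
    refine (ENNReal.div_lt_top ?_ hεne).ne
    exact_mod_cast ENNReal.natCast_ne_top (n*n)
  obtain ⟨k, hk⟩ := ENNReal.exists_nat_gt hdivt
  have hpow : (k : ℝ≥0∞) < ((K^k : ℕ) : ℝ≥0∞) := by
    exact_mod_cast Nat.lt_pow_self (n := k) (by omega : 1 < K)
  have hdiv : (n * n : ℝ≥0∞) / (ε : ℝ≥0∞) < ((K^k : ℕ) : ℝ≥0∞) := hk.trans hpow
  have hmul : (n * n : ℝ≥0∞) < ((K^k : ℕ) : ℝ≥0∞) * (ε : ℝ≥0∞) :=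
    (ENNReal.div_lt_iff (Or.inl hεne) (Or.inl ENNReal.coe_ne_top)).mp hdiv
  have hKk0 : ((K^k : ℕ) : ℝ≥0∞) ≠ 0 := by
    exact_mod_cast (Nat.cast_ne_zero (R := ℝ≥0∞)).2 (pow_ne_zero k (by omega : K ≠ 0))
  have hbound : (n * n : ℝ≥0∞) * ((K^k : ℕ) : ℝ≥0∞)⁻¹ ≤ (ε : ℝ≥0∞) := by
    calc (n * n : ℝ≥0∞) * ((K^k : ℕ) : ℝ≥0∞)⁻¹
        ≤ (((K^k : ℕ) : ℝ≥0∞) * ε) * ((K^k : ℕ) : ℝ≥0∞)⁻¹ := mul_le_mul_left hmul.le _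
      _ = (ε : ℝ≥0∞) * (((K^k : ℕ) : ℝ≥0∞) * ((K^k : ℕ) : ℝ≥0∞)⁻¹) := by ring
      _ = ε := by rw [ENNReal.mul_inv_cancel hKk0 (ENNReal.natCast_ne_top _), mul_one]
  exact (hkey k).trans (add_le_add le_rfl hbound)
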